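/- arXiv:1204.6545 — 4 statements merged into one kernel-verified Lean document; each statement's English description precedes it below -/
import Mathlib

section
/- The subdifferential of B(f) = Σ_i |f_i − m(f)| is ∂B(f) = P₀ · sign(P₀ f), and consequently ⟨v, 𝟏⟩ = 0 for every v ∈ ∂B(f). -/
open Finset Filter Topology

noncomputable def meanV {n : ℕ} (f : Fin n → ℝ) : ℝ := (∑ i, f i) / n
noncomputable def TVfun {n : ℕ} (w : Fin n → Fin n → ℝ) (f : Fin n → ℝ) : ℝ :=
  (1/2) * ∑ i, ∑ j, w i j * |f i - f j|
noncomputable def Bfun {n : ℕ} (f : Fin n → ℝ) : ℝ := ∑ i, |f i - meanV f|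
noncomputable def Efun {n : ℕ} (w : Fin n → Fin n → ℝ) (f : Fin n → ℝ) : ℝ :=
  TVfun w f / Bfun f
noncomputable def norm2 {n : ℕ} (f : Fin n → ℝ) : ℝ := Real.sqrt (∑ i, (f i)^2)
noncomputable def dotV {n : ℕ} (u v : Fin n → ℝ) : ℝ := ∑ i, u i * v i
def IsSubgradient {n : ℕ} (F : (Fin n → ℝ) → ℝ) (f v : Fin n → ℝ) : Prop :=
  ∀ y, F f + dotV v (y - f) ≤ F y
def GraphConnected {n : ℕ} (w : Fin n → Fin n → ℝ) : Prop :=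
  ∀ i j : Fin n, Relation.ReflTransGen (fun a b => 0 < w a b) i j
def Nonconstant {n : ℕ} (f : Fin n → ℝ) : Prop := ∃ i j, f i ≠ f j
def signSet (t : ℝ) : Set ℝ := if t > 0 then {1} else if t < 0 then {-1} else Set.Icc (-1) 1
noncomputable def P0 {n : ℕ} (f : Fin n → ℝ) : Fin n → ℝ := fun i => f i - meanV f

/-! ### Auxiliary lemmas -/

noncomputable def sgnR (a : ℝ) : ℝ := if 0 < a then 1 else -1

lemma signSet_mul {t x : ℝ} (h : x ∈ signSet t) : x * t = |t| ∧ |x| ≤ 1 := by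
  unfold signSet at h
  split_ifs at h with h1 h2
  · rcases h with rfl
    simp [abs_of_pos h1]
  · rcases h with rfl
    constructor
    · rw [abs_of_neg h2]; ring
    · simp
  · have ht : t = 0 := le_antisymm (not_lt.mp h1) (not_lt.mp h2)
    subst ht
    exact ⟨by simp, abs_le.mpr ⟨h.1, h.2⟩⟩

lemma abs_add_small {a t : ℝ} (ha : a ≠ 0) (ht : |t| ≤ |a|) :
    |a + t| = |a| + sgnR a * t := by
  unfold sgnR
  rcases ha.lt_or_gt with h | h
  · rw [abs_of_neg h] at ht
    have ht' := abs_le.mp ht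
    rw [if_neg (not_lt.mpr h.le), abs_of_neg h,
      abs_of_nonpos (by linarith [ht'.2] : a + t ≤ 0)]
    ring
  · rw [abs_of_pos h] at ht
    have ht' := abs_le.mp ht
    rw [if_pos h, abs_of_pos h, abs_of_nonneg (by linarith [ht'.1] : 0 ≤ a + t)]
    ring

lemma abs_sub_small {a t : ℝ} (ha : a ≠ 0) (ht : |t| ≤ |a|) :
    |a - t| = |a| - sgnR a * t := by
  have := abs_add_small ha (t := -t) (by rwa [abs_neg])
  rw [sub_eq_add_neg, this]
  ring

lemma meanV_add_const {n : ℕ} (hn : n ≠ 0) (f : Fin n → ℝ) (c : ℝ) :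
    meanV (fun i => f i + c) = meanV f + c := by
  unfold meanV
  rw [Finset.sum_add_distrib, Finset.sum_const, Finset.card_univ, Fintype.card_fin,
    nsmul_eq_mul, add_div, mul_div_cancel_left₀ c (by exact_mod_cast hn : (n : ℝ) ≠ 0)]

lemma sum_P0 {n : ℕ} (z : Fin n → ℝ) : ∑ i, P0 z i = 0 := by
  unfold P0 meanV
  rw [Finset.sum_sub_distrib, Finset.sum_const, Finset.card_univ, Fintype.card_fin,
    nsmul_eq_mul]
  rcases eq_or_ne n 0 with h | h
  · subst h; simp
  · have : (n : ℝ) ≠ 0 := by exact_mod_cast h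
    field_simp
    ring

lemma P0_add_const {n : ℕ} (hn : n ≠ 0) (v : Fin n → ℝ) (hv : ∑ i, v i = 0) (c : ℝ) :
    P0 (fun i => v i + c) = v := by
  funext i
  have hm : meanV (fun i => v i + c) = c := by
    unfold meanV
    rw [Finset.sum_add_distrib, hv, zero_add, Finset.sum_const, Finset.card_univ,
      Fintype.card_fin, nsmul_eq_mul,
      mul_div_cancel_left₀ c (by exact_mod_cast hn : (n : ℝ) ≠ 0)]
  simp [P0, hm]

lemma dot_P0_left {n : ℕ} (a b : Fin n → ℝ) :
    dotV (P0 a) b = (∑ i, a i * b i) - (∑ i, a i) * (∑ i, b i) / n := by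
  unfold dotV P0 meanV
  simp only [sub_mul]
  rw [Finset.sum_sub_distrib, ← Finset.mul_sum]
  ring

lemma dot_P0_right {n : ℕ} (a b : Fin n → ℝ) :
    dotV a (P0 b) = (∑ i, a i * b i) - (∑ i, a i) * (∑ i, b i) / n := by
  unfold dotV P0 meanV
  simp only [mul_sub]
  rw [Finset.sum_sub_distrib, ← Finset.sum_mul]
  ring

lemma dot_P0_comm {n : ℕ} (a b : Fin n → ℝ) : dotV (P0 a) b = dotV a (P0 b) := by
  rw [dot_P0_left, dot_P0_right]

lemma Bfun_eq_abs {n : ℕ} (f : Fin n → ℝ) : Bfun f = ∑ i, |P0 f i| := rfl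

lemma P0_sub_apply {n : ℕ} (y f : Fin n → ℝ) (i : Fin n) :
    P0 (y - f) i = P0 y i - P0 f i := by
  unfold P0 meanV
  simp only [Pi.sub_apply]
  rw [Finset.sum_sub_distrib, sub_div]
  ring

lemma easy_dir {n : ℕ} (f z : Fin n → ℝ) (hz : ∀ i, z i ∈ signSet (P0 f i)) :
    IsSubgradient Bfun f (P0 z) := by
  intro y
  have hmul : ∀ i, z i * P0 f i = |P0 f i| := fun i => (signSet_mul (hz i)).1
  have habs : ∀ i, |z i| ≤ 1 := fun i => (signSet_mul (hz i)).2
  have hdot : dotV (P0 z) (y - f) = (∑ i, z i * P0 y i) - ∑ i, z i * P0 f i := by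
    rw [dot_P0_comm]
    unfold dotV
    rw [← Finset.sum_sub_distrib]
    refine Finset.sum_congr rfl fun i _ => ?_
    rw [P0_sub_apply]
    ring
  have h2 : ∑ i, z i * P0 f i = ∑ i, |P0 f i| :=
    Finset.sum_congr rfl fun i _ => hmul i
  have h3 : ∑ i, z i * P0 y i ≤ ∑ i, |P0 y i| := by
    refine Finset.sum_le_sum fun i _ => ?_
    calc z i * P0 y i ≤ |z i * P0 y i| := le_abs_self _
      _ = |z i| * |P0 y i| := abs_mul _ _
      _ ≤ 1 * |P0 y i| := mul_le_mul_of_nonneg_right (habs i) (abs_nonneg _)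
      _ = |P0 y i| := one_mul _
  rw [Bfun_eq_abs f, Bfun_eq_abs y, hdot, h2]
  linarith

lemma key_ineq {n : ℕ} {f v : Fin n → ℝ} (hv : IsSubgradient Bfun f v)
    {i j : Fin n} (hij : i ≠ j) (t : ℝ) :
    t * (v i - v j) ≤ (|P0 f i + t| - |P0 f i|) + (|P0 f j - t| - |P0 f j|) := by
  set χ : Fin n → ℝ := fun k => (if k = i then t else 0) - (if k = j then t else 0) with hχ
  have hχi : χ i = t := by simp [hχ, hij]
  have hχj : χ j = -t := by simp [hχ, Ne.symm hij]
  have hχ0 : ∀ k, k ≠ i → k ≠ j → χ k = 0 := by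
    intro k hki hkj; simp [hχ, hki, hkj]
  have hsumχ : ∑ k, χ k = 0 := by
    simp [hχ, Finset.sum_sub_distrib]
  have hmean : meanV (fun k => f k + χ k) = meanV f := by
    unfold meanV
    rw [Finset.sum_add_distrib, hsumχ, add_zero]
  have hB : Bfun (fun k => f k + χ k) =
      Bfun f + ((|P0 f i + t| - |P0 f i|) + (|P0 f j - t| - |P0 f j|)) := by
    have h1 : Bfun (fun k => f k + χ k) = ∑ k, |P0 f k + χ k| := by
      unfold Bfun
      rw [hmean]
      exact Finset.sum_congr rfl fun k _ => by unfold P0; ring_nf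
    have h2 : ∑ k, (|P0 f k + χ k| - |P0 f k|) =
        (|P0 f i + t| - |P0 f i|) + (|P0 f j - t| - |P0 f j|) := by
      rw [← Finset.sum_subset (Finset.subset_univ ({i, j} : Finset (Fin n)))
        (fun k _ hk => ?_)]
      · rw [Finset.sum_pair hij, hχi, hχj, sub_eq_add_neg (P0 f j) t]
      · simp only [Finset.mem_insert, Finset.mem_singleton, not_or] at hk
        rw [hχ0 k hk.1 hk.2, add_zero, sub_self]
    rw [h1, Bfun_eq_abs]
    rw [Finset.sum_sub_distrib] at h2
    linarith
  have hdot : dotV v ((fun k => f k + χ k) - f) = t * (v i - v j) := by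
    unfold dotV
    have : ∀ k, v k * (((fun k => f k + χ k) - f) k) = v k * χ k := by
      intro k
      show v k * ((f k + χ k) - f k) = v k * χ k
      ring
    rw [Finset.sum_congr rfl fun k _ => this k]
    have hsplit : ∑ k, v k * χ k = ∑ k ∈ ({i, j} : Finset (Fin n)), v k * χ k := by
      refine (Finset.sum_subset (Finset.subset_univ _) fun k _ hk => ?_).symm
      simp only [Finset.mem_insert, Finset.mem_singleton, not_or] at hk
      rw [hχ0 k hk.1 hk.2, mul_zero]
    rw [hsplit, Finset.sum_pair hij, hχi, hχj]
    ring
  have hy := hv (fun k => f k + χ k)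
  rw [hB, hdot] at hy
  linarith

lemma fact1 {n : ℕ} {f v : Fin n → ℝ} (hv : IsSubgradient Bfun f v) {i j : Fin n}
    (hij : i ≠ j) (hi : P0 f i ≠ 0) (hj : P0 f j ≠ 0) :
    v i - v j = sgnR (P0 f i) - sgnR (P0 f j) := by
  set m := min |P0 f i| |P0 f j| with hm
  have hm0 : 0 < m := lt_min (abs_pos.mpr hi) (abs_pos.mpr hj)
  have hmi : |m| ≤ |P0 f i| := by rw [abs_of_pos hm0]; exact min_le_left _ _
  have hmj : |m| ≤ |P0 f j| := by rw [abs_of_pos hm0]; exact min_le_right _ _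
  have hmi' : |(-m)| ≤ |P0 f i| := by rwa [abs_neg]
  have hmj' : |(-m)| ≤ |P0 f j| := by rwa [abs_neg]
  have h1 := key_ineq hv hij m
  have h2 := key_ineq hv hij (-m)
  rw [abs_add_small hi hmi, abs_sub_small hj hmj] at h1
  rw [abs_add_small hi hmi', abs_sub_small hj hmj'] at h2
  have hA : v i - v j ≤ sgnR (P0 f i) - sgnR (P0 f j) :=
    le_of_mul_le_mul_left (by nlinarith [h1]) hm0
  have hB : sgnR (P0 f i) - sgnR (P0 f j) ≤ v i - v j :=
    le_of_mul_le_mul_left (by nlinarith [h2]) hm0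
  linarith

lemma fact2 {n : ℕ} {f v : Fin n → ℝ} (hv : IsSubgradient Bfun f v) {i j : Fin n}
    (hij : i ≠ j) (hi : P0 f i ≠ 0) (hj : P0 f j = 0) :
    sgnR (P0 f i) - 1 ≤ v i - v j ∧ v i - v j ≤ sgnR (P0 f i) + 1 := by
  set a := |P0 f i| with ha
  have ha0 : 0 < a := abs_pos.mpr hi
  have hai : |a| ≤ |P0 f i| := by rw [abs_of_pos ha0]
  have hai' : |(-a)| ≤ |P0 f i| := by rwa [abs_neg]
  have h1 := key_ineq hv hij a
  have h2 := key_ineq hv hij (-a)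
  rw [abs_add_small hi hai, hj] at h1
  rw [abs_add_small hi hai', hj] at h2
  simp only [hj, zero_sub, abs_neg, abs_zero, abs_of_pos ha0, sub_zero, neg_neg] at h1 h2
  constructor
  · exact le_of_mul_le_mul_left (by nlinarith [h2]) ha0
  · exact le_of_mul_le_mul_left (by nlinarith [h1]) ha0

lemma fact3 {n : ℕ} {f v : Fin n → ℝ} (hv : IsSubgradient Bfun f v) {i j : Fin n}
    (hij : i ≠ j) (hi : P0 f i = 0) (hj : P0 f j = 0) :
    v i - v j ≤ 2 := by
  have h1 := key_ineq hv hij 1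
  rw [hi, hj] at h1
  simp at h1
  linarith

lemma sum_v_eq_zero {n : ℕ} (hn : n ≠ 0) {f v : Fin n → ℝ}
    (hv : IsSubgradient Bfun f v) : ∑ i, v i = 0 := by
  have hB : ∀ c : ℝ, Bfun (fun k => f k + c) = Bfun f := by
    intro c
    unfold Bfun
    rw [meanV_add_const hn]
    exact Finset.sum_congr rfl fun k _ => by ring_nf
  have hd : ∀ c : ℝ, dotV v ((fun k => f k + c) - f) = c * ∑ i, v i := by
    intro c
    unfold dotV
    rw [Finset.mul_sum]
    refine Finset.sum_congr rfl fun k _ => ?_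
    show v k * ((f k + c) - f k) = c * v k
    ring
  have h1 := hv (fun k => f k + 1)
  have h2 := hv (fun k => f k + (-1))
  rw [hB 1, hd 1] at h1
  rw [hB (-1), hd (-1)] at h2
  linarith

lemma hard_dir {n : ℕ} {f v : Fin n → ℝ} (hv : IsSubgradient Bfun f v) :
    ∃ z : Fin n → ℝ, (∀ i, z i ∈ signSet (P0 f i)) ∧ v = P0 z := by
  rcases eq_or_ne n 0 with hn | hn
  · subst hn
    refine ⟨v, fun i => i.elim0, funext fun i => i.elim0⟩
  have hsum : ∑ i, v i = 0 := sum_v_eq_zero hn hv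
  by_cases hex : ∃ i0, P0 f i0 ≠ 0
  · obtain ⟨i0, hi0⟩ := hex
    refine ⟨fun i => v i + (sgnR (P0 f i0) - v i0), ?_, (P0_add_const hn v hsum _).symm⟩
    intro i
    unfold signSet
    split_ifs with h1 h2
    · -- P0 f i > 0, want z i = 1
      have hsi : sgnR (P0 f i) = 1 := if_pos h1
      rcases eq_or_ne i i0 with rfl | hii0
      · show v i + (sgnR (P0 f i) - v i) = 1
        rw [hsi]; ring
      · have := fact1 hv hii0 (ne_of_gt h1) hi0
        rw [hsi] at this
        show v i + (sgnR (P0 f i0) - v i0) = 1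
        linarith
    · -- P0 f i < 0, want z i = -1
      have hsi : sgnR (P0 f i) = -1 := if_neg (not_lt.mpr h2.le)
      rcases eq_or_ne i i0 with rfl | hii0
      · show v i + (sgnR (P0 f i) - v i) = -1
        rw [hsi]; ring
      · have := fact1 hv hii0 (ne_of_lt h2) hi0
        rw [hsi] at this
        show v i + (sgnR (P0 f i0) - v i0) = -1
        linarith
    · -- P0 f i = 0
      have hi : P0 f i = 0 := le_antisymm (not_lt.mp h1) (not_lt.mp h2)
      have hii0 : i0 ≠ i := fun h => hi0 (h ▸ hi)
      have hf2 := fact2 hv hii0 hi0 hi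
      have hs : sgnR (P0 f i0) = 1 ∨ sgnR (P0 f i0) = -1 := by
        unfold sgnR; split_ifs <;> simp
      show v i + (sgnR (P0 f i0) - v i0) ∈ Set.Icc (-1 : ℝ) 1
      constructor <;> · rcases hs with h | h <;> linarith [hf2.1, hf2.2]
  · push_neg at hex
    have hpos : 0 < n := Nat.pos_of_ne_zero hn
    obtain ⟨imax, _, hmax⟩ := Finset.exists_max_image Finset.univ v
      ⟨⟨0, hpos⟩, Finset.mem_univ _⟩
    obtain ⟨imin, _, hmin⟩ := Finset.exists_min_image Finset.univ v
      ⟨⟨0, hpos⟩, Finset.mem_univ _⟩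
    have hbound : v imax - v imin ≤ 2 := by
      rcases eq_or_ne imax imin with rfl | hne
      · simp
      · exact fact3 hv hne (hex imax) (hex imin)
    refine ⟨fun i => v i + (-(v imax + v imin) / 2), ?_, (P0_add_const hn v hsum _).symm⟩
    intro i
    unfold signSet
    rw [hex i]
    simp only [lt_self_iff_false, if_false, gt_iff_lt]
    show v i + (-(v imax + v imin) / 2) ∈ Set.Icc (-1 : ℝ) 1
    constructor
    · show (-1 : ℝ) ≤ v i + (-(v imax + v imin) / 2)
      linarith [hmin i (Finset.mem_univ i)]
    · show v i + (-(v imax + v imin) / 2) ≤ 1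
      linarith [hmax i (Finset.mem_univ i)]

theorem stmt5 {n : ℕ} (f : Fin n → ℝ) :
    (∀ v : Fin n → ℝ, IsSubgradient Bfun f v ↔
      ∃ z : Fin n → ℝ, (∀ i, z i ∈ signSet (P0 f i)) ∧ v = P0 z) ∧
    (∀ v : Fin n → ℝ, IsSubgradient Bfun f v → dotV v (fun _ => 1) = 0) := by
  have main : ∀ v : Fin n → ℝ, IsSubgradient Bfun f v ↔
      ∃ z : Fin n → ℝ, (∀ i, z i ∈ signSet (P0 f i)) ∧ v = P0 z := by
    intro v
    constructor
    · exact hard_dir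
    · rintro ⟨z, hz, rfl⟩
      exact easy_dir f z hz
  refine ⟨main, fun v hv => ?_⟩
  obtain ⟨z, _, rfl⟩ := (main v).mp hv
  unfold dotV
  simp only [mul_one]
  exact sum_P0 z
end

section
/- Let f be nonconstant, v ∈ ∂B(f), g = f + c·v, and h = argmin_u { T(u) + E(f)·‖u − g‖₂²/(2c) }. Then h is nonconstant and the descent inequality E(f) ≥ E(h) + (E(f)/B(h))·‖h − f‖₂²/c holds; in particular E(h) < E(f) unless h = f. -/
open Finset Filter Topology

lemma norm2_sq' {n : ℕ} (x : Fin n → ℝ) : norm2 x ^ 2 = ∑ i, (x i)^2 :=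
  Real.sq_sqrt (Finset.sum_nonneg fun i _ => sq_nonneg _)

lemma Bfun_pos' {n : ℕ} {x : Fin n → ℝ} (hx : Nonconstant x) : 0 < Bfun x := by
  obtain ⟨i, j, hij⟩ := hx
  have hor : x i ≠ meanV x ∨ x j ≠ meanV x := by
    by_contra hcon; push_neg at hcon; exact hij (hcon.1.trans hcon.2.symm)
  obtain hne | hne := hor <;>
  · apply Finset.sum_pos' (fun k _ => abs_nonneg _)
    exact ⟨_, Finset.mem_univ _, abs_pos.mpr (sub_ne_zero.mpr hne)⟩

lemma Bfun_const' {n : ℕ} {x : Fin n → ℝ} (i0 : Fin n) (hx : ∀ i j, x i = x j) :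
    Bfun x = 0 := by
  have hm : meanV x = x i0 := by
    have hs : ∑ i, x i = n * x i0 := by
      rw [Finset.sum_congr rfl (fun i _ => hx i i0)]
      simp [mul_comm]
    have hn : (n : ℝ) ≠ 0 := by
      have := i0.pos; positivity
    rw [meanV, hs]; field_simp
  unfold Bfun
  rw [hm]
  apply Finset.sum_eq_zero
  intro i _
  rw [hx i i0, sub_self, abs_zero]

lemma TVfun_const' {n : ℕ} (w : Fin n → Fin n → ℝ) {x : Fin n → ℝ} (hx : ∀ i j, x i = x j) :
    TVfun w x = 0 := by
  unfold TVfun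
  rw [Finset.sum_eq_zero]
  · ring
  intro i _
  apply Finset.sum_eq_zero
  intro j _
  rw [hx i j, sub_self, abs_zero, mul_zero]

lemma exists_edge' {n : ℕ} {w : Fin n → Fin n → ℝ} {x : Fin n → ℝ} {i j : Fin n}
    (hp : Relation.ReflTransGen (fun a b => 0 < w a b) i j) (hne : x i ≠ x j) :
    ∃ a b, 0 < w a b ∧ x a ≠ x b := by
  induction hp using Relation.ReflTransGen.head_induction_on with
  | refl => exact absurd rfl hne
  | head hab hp ih =>
    rename_i a b
    by_cases hx : x a = x b
    · exact ih (hx ▸ hne)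
    · exact ⟨a, b, hab, hx⟩

lemma TVfun_pos' {n : ℕ} {w : Fin n → Fin n → ℝ} {x : Fin n → ℝ}
    (hnn : ∀ i j, 0 ≤ w i j)
    (hconn : ∀ i j : Fin n, Relation.ReflTransGen (fun a b => 0 < w a b) i j)
    (hx : Nonconstant x) : 0 < TVfun w x := by
  obtain ⟨i, j, hij⟩ := hx
  obtain ⟨a, b, hw, hab⟩ := exists_edge' (hconn i j) hij
  have hterm : 0 < w a b * |x a - x b| := mul_pos hw (abs_pos.mpr (sub_ne_zero.mpr hab))
  have h1 : w a b * |x a - x b| ≤ ∑ k, w a k * |x a - x k| :=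
    Finset.single_le_sum (f := fun k => w a k * |x a - x k|)
      (fun k _ => mul_nonneg (hnn a k) (abs_nonneg _)) (Finset.mem_univ b)
  have h2 : ∑ k, w a k * |x a - x k| ≤ ∑ i, ∑ k, w i k * |x i - x k| :=
    Finset.single_le_sum (f := fun l => ∑ k, w l k * |x l - x k|)
      (fun l _ => Finset.sum_nonneg fun k _ => mul_nonneg (hnn l k) (abs_nonneg _))
      (Finset.mem_univ a)
  unfold TVfun; nlinarith

lemma TVfun_conv' {n : ℕ} {w : Fin n → Fin n → ℝ} (hnn : ∀ i j, 0 ≤ w i j)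
    (x y : Fin n → ℝ) {t : ℝ} (ht0 : 0 ≤ t) (ht1 : t ≤ 1) :
    TVfun w (fun i => (1-t) * x i + t * y i) ≤ (1-t) * TVfun w x + t * TVfun w y := by
  have key : ∀ i j, w i j * |((1-t)*x i + t*y i) - ((1-t)*x j + t*y j)| ≤
      (1-t) * (w i j * |x i - x j|) + t * (w i j * |y i - y j|) := by
    intro i j
    have h1 : ((1-t)*x i + t*y i) - ((1-t)*x j + t*y j)
        = (1-t)*(x i - x j) + t*(y i - y j) := by ring
    have habs : |((1-t)*x i + t*y i) - ((1-t)*x j + t*y j)| ≤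
        (1-t)*|x i - x j| + t*|y i - y j| := by
      rw [h1]
      calc |(1-t)*(x i - x j) + t*(y i - y j)|
          ≤ |(1-t)*(x i - x j)| + |t*(y i - y j)| := abs_add_le _ _
        _ = (1-t)*|x i - x j| + t*|y i - y j| := by
            rw [abs_mul, abs_mul, abs_of_nonneg (by linarith : (0:ℝ) ≤ 1-t),
              abs_of_nonneg ht0]
    nlinarith [hnn i j, abs_nonneg (x i - x j), abs_nonneg (y i - y j),
      abs_nonneg (((1-t)*x i + t*y i) - ((1-t)*x j + t*y j))]
  have hmain : ∑ i, ∑ j, w i j * |((1-t)*x i + t*y i) - ((1-t)*x j + t*y j)| ≤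
      (1-t) * (∑ i, ∑ j, w i j * |x i - x j|) + t * (∑ i, ∑ j, w i j * |y i - y j|) := by
    rw [Finset.mul_sum, Finset.mul_sum, ← Finset.sum_add_distrib]
    apply Finset.sum_le_sum; intro i _
    rw [Finset.mul_sum, Finset.mul_sum, ← Finset.sum_add_distrib]
    exact Finset.sum_le_sum fun j _ => key i j
  unfold TVfun; linarith

lemma step_arith' (Th Tf Tu a1 b1 d1 t : ℝ) (ht0 : 0 < t)
    (hu : Th + a1 ≤ Tu + ((1-t)*a1 + t*b1 - t*(1-t)*d1))
    (hconv : Tu ≤ (1-t)*Th + t*Tf) :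
    Th + a1 + (1-t)*d1 ≤ Tf + b1 := by
  have hmul : t * ((Th + a1 + (1-t)*d1) - (Tf + b1)) ≤ t * 0 := by linarith
  have := le_of_mul_le_mul_left hmul ht0
  linarith

theorem stmt7 {n : ℕ} (w : Fin n → Fin n → ℝ)
    (hsym : ∀ i j, w i j = w j i) (hnn : ∀ i j, 0 ≤ w i j)
    (hconn : GraphConnected w) (c : ℝ) (hc : 0 < c)
    (f v g h : Fin n → ℝ) (hf : Nonconstant f)
    (hv : IsSubgradient Bfun f v) (hg : g = f + c • v)
    (hh : ∀ u : Fin n → ℝ,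
      TVfun w h + Efun w f * norm2 (h - g)^2 / (2*c)
        ≤ TVfun w u + Efun w f * norm2 (u - g)^2 / (2*c)) :
    Nonconstant h ∧
    Efun w h + (Efun w f / Bfun h) * norm2 (h - f)^2 / c ≤ Efun w f ∧
    (h ≠ f → Efun w h < Efun w f) := by
  obtain ⟨i0, j0, hf0⟩ := hf
  have hBf : 0 < Bfun f := Bfun_pos' ⟨i0, j0, hf0⟩
  have hTf : 0 < TVfun w f := TVfun_pos' hnn hconn ⟨i0, j0, hf0⟩
  have hEdef : Efun w f = TVfun w f / Bfun f := rfl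
  set E := Efun w f with hE_def
  have hE : 0 < E := hEdef ▸ div_pos hTf hBf
  set A := ∑ i, (h i - g i)^2 with hA
  set B := ∑ i, (f i - g i)^2 with hB
  set D := ∑ i, (h i - f i)^2 with hD
  have hDnn : 0 ≤ D := Finset.sum_nonneg fun i _ => sq_nonneg _
  have hh' : ∀ u : Fin n → ℝ, TVfun w h + E * A / (2*c)
      ≤ TVfun w u + E * (∑ i, (u i - g i)^2) / (2*c) := by
    intro u
    have h2 := hh u
    rw [norm2_sq', norm2_sq'] at h2
    simp only [Pi.sub_apply] at h2
    rw [← hA] at h2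
    exact h2
  -- strong-convexity type step
  have hstep : ∀ t : ℝ, 0 < t → t < 1 →
      TVfun w h + E*A/(2*c) + E*(1-t)*D/(2*c) ≤ TVfun w f + E*B/(2*c) := by
    intro t ht0 ht1
    have hu := hh' (fun i => (1-t)*h i + t*f i)
    have hsum : ∑ i, ((1-t)*h i + t*f i - g i)^2
        = (1-t)*A + t*B - t*(1-t)*D := by
      rw [hA, hB, hD, Finset.mul_sum, Finset.mul_sum, Finset.mul_sum,
        ← Finset.sum_add_distrib, ← Finset.sum_sub_distrib]
      exact Finset.sum_congr rfl fun i _ => by ring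
    rw [hsum] at hu
    have hconv := TVfun_conv' hnn h f ht0.le ht1.le
    have hc' : c ≠ 0 := ne_of_gt hc
    have e1 : E*((1-t)*A + t*B - t*(1-t)*D)/(2*c)
        = (1-t)*(E*A/(2*c)) + t*(E*B/(2*c)) - t*(1-t)*(E*D/(2*c)) := by
      field_simp
    rw [e1] at hu
    have e2 : E*(1-t)*D/(2*c) = (1-t)*(E*D/(2*c)) := by ring
    rw [e2]
    exact step_arith' _ _ _ _ _ _ t ht0 hu hconv
  -- pass to the limit t → 0
  have hstar : TVfun w h + E*A/(2*c) + E*D/(2*c) ≤ TVfun w f + E*B/(2*c) := by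
    by_contra hcon
    push_neg at hcon
    set X := E*D/(2*c) with hX
    set C := TVfun w f + E*B/(2*c) - (TVfun w h + E*A/(2*c)) with hC
    have hC0 : 0 ≤ C := by have := hh' f; rw [← hB] at this; rw [hC]; linarith
    have hCX : C < X := by rw [hC, hX]; linarith
    have hXpos : 0 < X := lt_of_le_of_lt hC0 hCX
    have hXne : X ≠ 0 := ne_of_gt hXpos
    set t0 := (X - C)/(2*X) with ht0def
    have ht0pos : 0 < t0 := by
      rw [ht0def]; apply div_pos (by linarith) (by linarith)
    have ht0lt1 : t0 < 1 := by
      rw [ht0def, div_lt_one (by linarith)]; linarith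
    have hs := hstep t0 ht0pos ht0lt1
    have he : E*(1-t0)*D/(2*c) = (1-t0)*X := by rw [hX]; ring
    rw [he] at hs
    have hcomp : (1 - t0) * X = (X + C)/2 := by
      rw [ht0def]; field_simp; ring
    rw [hcomp] at hs
    rw [hC] at hs
    linarith
  -- expand g = f + c v
  have hgi : ∀ i, g i = f i + c * v i := by
    intro i; rw [hg]; simp
  have hBeq : B = c^2 * ∑ i, (v i)^2 := by
    rw [hB, Finset.mul_sum]
    exact Finset.sum_congr rfl fun i _ => by rw [hgi i]; ring
  have hAeq : A = D - 2*c*(∑ i, v i * (h i - f i)) + c^2 * ∑ i, (v i)^2 := by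
    rw [hA, hD, Finset.mul_sum, Finset.mul_sum,
      ← Finset.sum_sub_distrib, ← Finset.sum_add_distrib]
    exact Finset.sum_congr rfl fun i _ => by rw [hgi i]; ring
  have hsubgr : ∑ i, v i * (h i - f i) ≤ Bfun h - Bfun f := by
    have := hv h
    unfold dotV at this
    simp only [Pi.sub_apply] at this
    linarith
  -- main inequality
  have hM : TVfun w h + E * D / c ≤ E * Bfun h := by
    rw [hAeq, hBeq] at hstar
    have hc' : c ≠ 0 := ne_of_gt hc
    set S := ∑ i, v i * (h i - f i) with hS
    set V := ∑ i, (v i)^2 with hV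
    have e1 : E*(D - 2*c*S + c^2*V)/(2*c) = E*D/(2*c) - E*S + c*(E*V)/2 := by
      field_simp
    have e2 : E*(c^2*V)/(2*c) = c*(E*V)/2 := by field_simp
    have e3 : E*D/(2*c) + E*D/(2*c) = E*D/c := by field_simp; ring
    have hEmul : E*S ≤ E*(Bfun h - Bfun f) :=
      mul_le_mul_of_nonneg_left hsubgr hE.le
    have hEB : E * Bfun f = TVfun w f := div_mul_cancel₀ _ (ne_of_gt hBf)
    linarith [hstar, e1, e2, e3, hEmul, hEB]
  -- h is nonconstant
  have hnc : Nonconstant h := by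
    by_contra hcon
    unfold Nonconstant at hcon; push_neg at hcon
    have hT0 : TVfun w h = 0 := TVfun_const' w hcon
    have hB0 : Bfun h = 0 := Bfun_const' i0 hcon
    rw [hT0, hB0, mul_zero] at hM
    have hq : E*D/c = 0 := le_antisymm (by linarith) (by positivity)
    have hq2 : D = 0 := by
      have hid : D = (E*D/c) * (c/E) := by
        field_simp [ne_of_gt hE, ne_of_gt hc]
      rw [hq, zero_mul] at hid
      exact hid
    have hall : ∀ i, h i = f i := by
      intro i
      have hzero : (h i - f i)^2 = 0 :=
        (Finset.sum_eq_zero_iff_of_nonneg (fun k _ => sq_nonneg (h k - f k))).mp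
          (hD.symm.trans hq2) i (Finset.mem_univ i)
      exact sub_eq_zero.mp ((pow_eq_zero_iff (by norm_num : 2 ≠ 0)).mp hzero)
    exact hf0 (by rw [← hall i0, ← hall j0, hcon i0 j0])
  have hBh : 0 < Bfun h := Bfun_pos' hnc
  have hmain2 : Efun w h + (E / Bfun h) * D / c ≤ E := by
    have heq : Efun w h + (E / Bfun h) * D / c = (TVfun w h + E*D/c) / Bfun h := by
      simp only [Efun]
      field_simp
    rw [heq, div_le_iff₀ hBh]
    exact hM
  refine ⟨hnc, ?_, ?_⟩
  · rw [norm2_sq']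
    simp only [Pi.sub_apply]
    rw [← hD]
    exact hmain2
  · intro hne
    have hDpos : 0 < D := by
      have hex : ∃ i, h i ≠ f i := by
        by_contra hcc; push_neg at hcc; exact hne (funext hcc)
      obtain ⟨i, hi⟩ := hex
      rw [hD]
      exact Finset.sum_pos' (fun k _ => sq_nonneg _)
        ⟨i, Finset.mem_univ i,
          lt_of_le_of_ne (sq_nonneg _) (Ne.symm (pow_ne_zero 2 (sub_ne_zero.mpr hi)))⟩
    have hstrict : 0 < (E / Bfun h) * D / c := by positivity
    linarith
end

section
/- For a sequence (f^k, h^k) generated by the algorithm, ‖h^k − f^k‖₂ → 0 and ‖f^{k+1} − f^k‖₂ → 0 as k → ∞. -/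
open Finset Filter Topology

section aux
variable {n : ℕ}

lemma Bfun_nonneg (f : Fin n → ℝ) : 0 ≤ Bfun f :=
  Finset.sum_nonneg fun i _ => abs_nonneg _

lemma TVfun_nonneg (w : Fin n → Fin n → ℝ) (hnn : ∀ i j, 0 ≤ w i j) (f : Fin n → ℝ) :
    0 ≤ TVfun w f := by
  apply mul_nonneg (by norm_num)
  exact Finset.sum_nonneg fun i _ => Finset.sum_nonneg fun j _ =>
    mul_nonneg (hnn i j) (abs_nonneg _)

lemma Efun_nonneg (w : Fin n → Fin n → ℝ) (hnn : ∀ i j, 0 ≤ w i j) (f : Fin n → ℝ) :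
    0 ≤ Efun w f := div_nonneg (TVfun_nonneg w hnn f) (Bfun_nonneg f)

lemma meanV_smul (t : ℝ) (f : Fin n → ℝ) : meanV (t • f) = t * meanV f := by
  simp [meanV, ← Finset.mul_sum, mul_div_assoc]

lemma sum_eq_zero_of_mean {f : Fin n → ℝ} (hn : (n : ℝ) ≠ 0) (hm : meanV f = 0) :
    ∑ i, f i = 0 := by
  have := hm; rw [meanV, div_eq_zero_iff] at this
  tauto

lemma Bfun_of_mean_zero {f : Fin n → ℝ} (hm : meanV f = 0) : Bfun f = ∑ i, |f i| := by
  simp [Bfun, hm]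

lemma Bfun_pos {f : Fin n → ℝ} (hm : meanV f = 0) (hf : f ≠ 0) : 0 < Bfun f := by
  rw [Bfun_of_mean_zero hm]
  obtain ⟨i, hi⟩ := Function.ne_iff.mp hf
  exact Finset.sum_pos' (fun j _ => abs_nonneg _)
    ⟨i, Finset.mem_univ i, abs_pos.mpr hi⟩

lemma TVfun_smul (w : Fin n → Fin n → ℝ) (t : ℝ) (f : Fin n → ℝ) :
    TVfun w (t • f) = |t| * TVfun w f := by
  simp only [TVfun, Pi.smul_apply, smul_eq_mul, ← mul_sub, abs_mul, Finset.mul_sum]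
  apply Finset.sum_congr rfl; intro i _
  apply Finset.sum_congr rfl; intro j _
  ring

lemma Bfun_smul (t : ℝ) (f : Fin n → ℝ) : Bfun (t • f) = |t| * Bfun f := by
  simp only [Bfun, meanV_smul, Pi.smul_apply, smul_eq_mul, ← mul_sub, abs_mul, Finset.mul_sum]

lemma Efun_smul (w : Fin n → Fin n → ℝ) {t : ℝ} (ht : t ≠ 0) (f : Fin n → ℝ) :
    Efun w (t • f) = Efun w f := by
  rw [Efun, Efun, TVfun_smul, Bfun_smul, mul_div_mul_left _ _ (abs_ne_zero.mpr ht)]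

lemma TVfun_zero_const {w : Fin n → Fin n → ℝ} (hnn : ∀ i j, 0 ≤ w i j)
    (hconn : GraphConnected w) {f : Fin n → ℝ} (hTV : TVfun w f = 0) (i j : Fin n) :
    f i = f j := by
  have hsum : ∑ i, ∑ j, w i j * |f i - f j| = 0 := by
    have := hTV; rw [TVfun] at this; linarith
  have hterm : ∀ a b : Fin n, w a b * |f a - f b| = 0 := by
    intro a b
    have h1 := (Finset.sum_eq_zero_iff_of_nonneg (fun x _ => Finset.sum_nonneg
      (fun y _ => mul_nonneg (hnn x y) (abs_nonneg _)))).mp hsum a (Finset.mem_univ a)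
    exact (Finset.sum_eq_zero_iff_of_nonneg (fun y _ => mul_nonneg (hnn a y)
      (abs_nonneg _))).mp h1 b (Finset.mem_univ b)
  have key : ∀ a b : Fin n, 0 < w a b → f a = f b := by
    intro a b hw
    have := hterm a b
    rcases mul_eq_zero.mp this with h | h
    · exact absurd h (ne_of_gt hw)
    · have := abs_eq_zero.mp h; linarith
  induction (hconn i j) with
  | refl => rfl
  | tail _ hwe ih => exact ih.trans (key _ _ hwe)

lemma TVfun_pos {w : Fin n → Fin n → ℝ} (hnn : ∀ i j, 0 ≤ w i j)
    (hconn : GraphConnected w) {f : Fin n → ℝ} (hm : meanV f = 0) (hf : f ≠ 0) :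
    0 < TVfun w f := by
  rcases lt_or_eq_of_le (TVfun_nonneg w hnn f) with hlt | heq
  · exact hlt
  exfalso
  obtain ⟨i, hi⟩ := Function.ne_iff.mp hf
  have hconst : ∀ j, f j = f i := fun j => TVfun_zero_const hnn hconn heq.symm j i
  have hn : (n : ℝ) ≠ 0 := by
    have : 0 < n := i.pos
    exact_mod_cast this.ne'
  have hsum : ∑ j, f j = 0 := sum_eq_zero_of_mean hn hm
  rw [Finset.sum_congr rfl (fun j _ => hconst j), Finset.sum_const, Finset.card_univ,
    Fintype.card_fin, nsmul_eq_mul] at hsum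
  rcases mul_eq_zero.mp hsum with h | h
  · exact hn h
  · exact hi h

lemma Efun_pos {w : Fin n → Fin n → ℝ} (hnn : ∀ i j, 0 ≤ w i j)
    (hconn : GraphConnected w) {f : Fin n → ℝ} (hm : meanV f = 0) (hf : f ≠ 0) :
    0 < Efun w f := div_pos (TVfun_pos hnn hconn hm hf) (Bfun_pos hm hf)

lemma TVfun_translate (w : Fin n → Fin n → ℝ) (f : Fin n → ℝ) (t : ℝ) :
    TVfun w (f + t • (fun _ => (1:ℝ))) = TVfun w f := by
  simp [TVfun]

lemma meanV_translate (hn : (n : ℝ) ≠ 0) (f : Fin n → ℝ) (t : ℝ) :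
    meanV (f + t • (fun _ => (1:ℝ))) = meanV f + t := by
  simp only [meanV, Pi.add_apply, Pi.smul_apply, smul_eq_mul, mul_one,
    Finset.sum_add_distrib, Finset.sum_const, Finset.card_univ, Fintype.card_fin,
    nsmul_eq_mul, add_div]
  field_simp

lemma Bfun_translate (hn : (n : ℝ) ≠ 0) (f : Fin n → ℝ) (t : ℝ) :
    Bfun (f + t • (fun _ => (1:ℝ))) = Bfun f := by
  simp only [Bfun, meanV_translate hn]
  apply Finset.sum_congr rfl; intro i _
  simp only [Pi.add_apply, Pi.smul_apply, smul_eq_mul, mul_one]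
  ring_nf

lemma subgrad_sum_zero (hn : (n : ℝ) ≠ 0) {f v : Fin n → ℝ}
    (hv : IsSubgradient Bfun f v) : ∑ i, v i = 0 := by
  have h1 := hv (f + (1:ℝ) • (fun _ => (1:ℝ)))
  have h2 := hv (f + (-1:ℝ) • (fun _ => (1:ℝ)))
  rw [Bfun_translate hn] at h1 h2
  simp only [add_sub_cancel_left, dotV, Pi.smul_apply, smul_eq_mul] at h1 h2
  simp only [mul_one, mul_neg, Finset.sum_neg_distrib] at h1 h2
  linarith

end aux




noncomputable def toE {n : ℕ} (f : Fin n → ℝ) : EuclideanSpace ℝ (Fin n) :=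
  (WithLp.equiv 2 (Fin n → ℝ)).symm f

lemma norm2_eq_norm {n : ℕ} (f : Fin n → ℝ) : norm2 f = ‖toE f‖ := by
  rw [EuclideanSpace.norm_eq]
  simp [norm2, toE, Real.norm_eq_abs, sq_abs]

lemma toE_sub {n : ℕ} (a b : Fin n → ℝ) : toE (a - b) = toE a - toE b := by
  simp [toE]

lemma toE_add {n : ℕ} (a b : Fin n → ℝ) : toE (a + b) = toE a + toE b := by
  simp [toE]

lemma toE_smul {n : ℕ} (t : ℝ) (a : Fin n → ℝ) : toE (t • a) = t • toE a := by
  simp [toE]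

lemma norm2_nonneg {n : ℕ} (f : Fin n → ℝ) : 0 ≤ norm2 f := Real.sqrt_nonneg _

lemma sq_norm2 {n : ℕ} (f : Fin n → ℝ) : norm2 f ^ 2 = ∑ i, (f i)^2 :=
  Real.sq_sqrt (by positivity)

lemma norm2_smul {n : ℕ} (t : ℝ) (f : Fin n → ℝ) : norm2 (t • f) = |t| * norm2 f := by
  rw [norm2_eq_norm, toE_smul, norm_smul, Real.norm_eq_abs, norm2_eq_norm]

lemma norm2_pos {n : ℕ} {f : Fin n → ℝ} (hf : f ≠ 0) : 0 < norm2 f := by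
  rw [norm2_eq_norm]
  have : toE f ≠ 0 := by
    simpa [toE] using fun hh => hf ((WithLp.equiv 2 (Fin n → ℝ)).symm.injective (by simpa [toE] using hh))
  exact norm_pos_iff.mpr this

lemma norm2_triangle {n : ℕ} (a b : Fin n → ℝ) : norm2 (a + b) ≤ norm2 a + norm2 b := by
  simp only [norm2_eq_norm, toE_add]; exact norm_add_le _ _

lemma norm2_sub_rev {n : ℕ} (a b : Fin n → ℝ) : norm2 (a - b) = norm2 (b - a) := by
  simp only [norm2_eq_norm, toE_sub]; exact norm_sub_rev _ _

lemma abs_norm2_sub_norm2 {n : ℕ} (a b : Fin n → ℝ) : |norm2 a - norm2 b| ≤ norm2 (a - b) := by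
  simp only [norm2_eq_norm, toE_sub]; exact abs_norm_sub_norm_le _ _

section step
variable {n : ℕ}

lemma sq_norm2_expand (x d : Fin n → ℝ) :
    norm2 (x - d)^2 = (∑ i, (x i)^2) - 2*(∑ i, x i * d i) + ∑ i, (d i)^2 := by
  rw [sq_norm2]
  have : ∀ i : Fin n, ((x - d) i)^2 = (x i)^2 - 2*(x i * d i) + (d i)^2 := by
    intro i; simp only [Pi.sub_apply]; ring
  simp_rw [this, Finset.sum_add_distrib, Finset.sum_sub_distrib, ← Finset.mul_sum]

lemma Bfun_le_sqrt {f : Fin n → ℝ} (hm : meanV f = 0) :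
    Bfun f ≤ Real.sqrt n * norm2 f := by
  rw [Bfun_of_mean_zero hm]
  have h1 : (∑ i, |f i|)^2 ≤ (n : ℝ) * ∑ i, (f i)^2 := by
    have := sq_sum_le_card_mul_sum_sq (s := Finset.univ) (f := fun i : Fin n => |f i|)
    simpa [sq_abs, Finset.card_univ] using this
  have h2 : ∑ i, |f i| = Real.sqrt ((∑ i, |f i|)^2) :=
    (Real.sqrt_sq (Finset.sum_nonneg fun i _ => abs_nonneg _)).symm
  rw [h2]
  calc Real.sqrt ((∑ i, |f i|)^2) ≤ Real.sqrt ((n:ℝ) * ∑ i, (f i)^2) :=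
        Real.sqrt_le_sqrt h1
    _ = Real.sqrt n * norm2 f := by
        rw [Real.sqrt_mul (by positivity), norm2]

lemma step_lemma (w : Fin n → Fin n → ℝ) (hnn : ∀ i j, 0 ≤ w i j)
    (hconn : GraphConnected w) {c : ℝ} (hc : 0 < c)
    {f v h : Fin n → ℝ}
    (hmean : meanV f = 0) (hfnz : f ≠ 0)
    (hv : IsSubgradient Bfun f v)
    (hmin : ∀ u, TVfun w h + Efun w f * norm2 (h - (f + c • v))^2 / (2*c)
        ≤ TVfun w u + Efun w f * norm2 (u - (f + c • v))^2 / (2*c)) :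
    meanV h = 0 ∧ h ≠ 0 ∧
    Efun w ((norm2 h)⁻¹ • h) ≤ Efun w f ∧
    norm2 (h - f)^2 ≤ 2*c*(Bfun h) ∧
    Efun w f * norm2 (h - f)^2 ≤ 2*c*(Bfun h)*(Efun w f - Efun w ((norm2 h)⁻¹ • h)) := by
  obtain ⟨i0, hi0⟩ := Function.ne_iff.mp hfnz
  have hn : (n : ℝ) ≠ 0 := by
    have : 0 < n := i0.pos
    exact_mod_cast this.ne'
  have hnpos : (0:ℝ) < n := lt_of_le_of_ne (Nat.cast_nonneg n) (Ne.symm hn)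
  have h2c : (0:ℝ) < 2*c := by linarith
  set E := Efun w f with hEdef
  have hE : 0 < E := Efun_pos hnn hconn hmean hfnz
  have hBf : 0 < Bfun f := Bfun_pos hmean hfnz
  have hTVf : TVfun w f = E * Bfun f := by
    rw [hEdef, Efun, div_mul_cancel₀ _ hBf.ne']
  have hsumf : ∑ i, f i = 0 := sum_eq_zero_of_mean hn hmean
  have hsumv : ∑ i, v i = 0 := subgrad_sum_zero hn hv
  set g := f + c • v with hgdef
  have hsumg : ∑ i, g i = 0 := by
    simp only [hgdef, Pi.add_apply, Pi.smul_apply, smul_eq_mul,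
      Finset.sum_add_distrib, hsumf, ← Finset.mul_sum, hsumv]
    ring
  -- mean of h is zero
  have hmeanh : meanV h = 0 := by
    set m := meanV h with hmdef
    have hsumh : ∑ i, h i = n * m := by
      rw [hmdef, meanV]; field_simp
    have key := hmin (h - m • (fun _ => (1:ℝ)))
    have hTVu : TVfun w (h - m • (fun _ => (1:ℝ))) = TVfun w h := by
      have : h - m • (fun _ => (1:ℝ)) = h + (-m) • (fun _ => (1:ℝ)) := by
        funext i; simp only [Pi.sub_apply, Pi.add_apply, Pi.smul_apply, smul_eq_mul]; ring
      rw [this, TVfun_translate]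
    have hrearr : h - m • (fun _ => (1:ℝ)) - g = (h - g) - m • (fun _ => (1:ℝ)) := by
      funext i; simp only [Pi.sub_apply, Pi.smul_apply, smul_eq_mul]; ring
    have hnormu : norm2 (h - m • (fun _ => (1:ℝ)) - g)^2 = norm2 (h - g)^2 - n * m^2 := by
      rw [hrearr, sq_norm2_expand, sq_norm2]
      have e1 : ∑ i, (h - g) i * (m • (fun _ => (1:ℝ))) i = m * (n * m) := by
        simp only [Pi.smul_apply, smul_eq_mul, mul_one, ← Finset.sum_mul,
          Finset.sum_sub_distrib, Pi.sub_apply, hsumh, hsumg]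
        ring
      have e2 : ∑ _i : Fin n, ((m • (fun _ => (1:ℝ))) _i)^2 = n * m^2 := by
        simp [Finset.sum_const, Finset.card_univ, mul_pow, nsmul_eq_mul]
      rw [e1, e2]; ring
    rw [hTVu, hnormu] at key
    have hineq : E * (norm2 (h - g) ^ 2) ≤ E * (norm2 (h - g) ^ 2 - n * m ^ 2) := by
      have h' := (add_le_add_iff_left (TVfun w h)).mp key
      exact (div_le_div_iff_of_pos_right h2c).mp h'
    have hm2 : m^2 ≤ 0 := by nlinarith [hineq, mul_pos hE hnpos]
    have : m^2 = 0 := le_antisymm hm2 (sq_nonneg m)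
    exact pow_eq_zero_iff (by norm_num) |>.mp this
  -- key inequality
  have key2 := hmin f
  have hfg : norm2 (f - g)^2 = c^2 * ∑ i, (v i)^2 := by
    rw [sq_norm2]
    have : ∀ i : Fin n, ((f - g) i)^2 = c^2 * (v i)^2 := by
      intro i; simp only [hgdef, Pi.sub_apply, Pi.add_apply, Pi.smul_apply, smul_eq_mul]; ring
    simp_rw [this, ← Finset.mul_sum]
  have hhg : h - g = (h - f) - c • v := by
    funext i; simp only [hgdef, Pi.sub_apply, Pi.add_apply, Pi.smul_apply, smul_eq_mul]; ring
  set S := norm2 (h - f)^2 with hSdef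
  set D := dotV v (h - f) with hDdef
  set V := ∑ i, (v i)^2 with hVdef
  have hhg2 : norm2 (h - g)^2 = S - 2*(c*D) + c^2*V := by
    rw [hhg, sq_norm2_expand, ← sq_norm2]
    have e1 : ∑ i, (h - f) i * (c • v) i = c * D := by
      rw [hDdef, dotV, Finset.mul_sum]
      apply Finset.sum_congr rfl; intro i _
      simp only [Pi.smul_apply, smul_eq_mul]; ring
    have e2 : ∑ i, ((c • v) i)^2 = c^2 * V := by
      simp only [hVdef, Pi.smul_apply, smul_eq_mul, mul_pow, ← Finset.mul_sum]
    rw [e1, e2]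
  have hsub : Bfun f + D ≤ Bfun h := hv h
  rw [hhg2, hfg] at key2
  have e1 : E * (S - 2*(c*D) + c^2*V) / (2*c) = E*S/(2*c) - E*D + E*c*V/2 := by
    field_simp
  have e2 : E * (c^2*V) / (2*c) = E*c*V/2 := by
    field_simp
  rw [e1, e2, hTVf] at key2
  have KEY : TVfun w h + E * S / (2*c) ≤ E * Bfun h := by nlinarith
  have hTVh : 0 ≤ TVfun w h := TVfun_nonneg w hnn h
  have hSnn : 0 ≤ S := by rw [hSdef]; positivity
  -- bound (a)
  have hBnd : S ≤ 2*c*(Bfun h) := by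
    have h1 : E * S / (2*c) ≤ E * Bfun h := by linarith
    rw [div_le_iff₀ h2c] at h1
    nlinarith [h1, hE]
  -- h ≠ 0
  have hhnz : h ≠ 0 := by
    intro h0
    have hBh0 : Bfun h = 0 := by
      rw [Bfun_of_mean_zero hmeanh, h0]; simp
    have hS0 : S ≤ 0 := by rw [hBh0] at hBnd; linarith
    have hnef : h - f ≠ 0 := by
      rw [h0]; simpa [neg_eq_zero] using hfnz
    have : 0 < S := by rw [hSdef]; exact pow_pos (norm2_pos hnef) 2
    linarith
  have hnh : 0 < norm2 h := norm2_pos hhnz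
  have hEh : Efun w ((norm2 h)⁻¹ • h) = Efun w h := Efun_smul w (inv_ne_zero hnh.ne') h
  rcases (Bfun_nonneg h).lt_or_eq with hBh | hBh
  · -- Bfun h > 0
    have hEhval : Efun w h = TVfun w h / Bfun h := rfl
    have hmon : Efun w h ≤ E := by
      rw [hEhval, div_le_iff₀ hBh]
      linarith [KEY, div_nonneg (mul_nonneg hE.le hSnn) h2c.le]
    refine ⟨hmeanh, hhnz, by rw [hEh]; exact hmon, hBnd, ?_⟩
    rw [hEh, hEhval]
    have hgoal : 2*c*Bfun h*(E - TVfun w h / Bfun h) = (E * Bfun h - TVfun w h) * (2*c) := by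
      field_simp
    rw [hgoal]
    have h1 : E * S / (2*c) ≤ E * Bfun h - TVfun w h := by linarith
    rwa [div_le_iff₀ h2c] at h1
  · -- Bfun h = 0 : then h = f
    have hBh0 : Bfun h = 0 := hBh.symm
    have hS0 : S = 0 := le_antisymm (by rw [hBh0] at hBnd; linarith) hSnn
    have hhf : h = f := by
      by_contra hne
      have : h - f ≠ 0 := sub_ne_zero_of_ne hne
      have := pow_pos (norm2_pos this) 2
      rw [← hSdef] at this; linarith
    have hEhf : Efun w h = E := by rw [hhf]
    refine ⟨hmeanh, hhnz, by rw [hEh, hEhf], hBnd, ?_⟩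
    rw [hEh, hEhf, hS0]
    simp
end step

theorem stmt12 {n : ℕ} (w : Fin n → Fin n → ℝ)
    (hsym : ∀ i j, w i j = w j i) (hnn : ∀ i j, 0 ≤ w i j)
    (hconn : GraphConnected w) (c : ℝ) (hc : 0 < c)
    (f v h : ℕ → Fin n → ℝ)
    (hf0 : meanV (f 0) = 0) (hf0nz : f 0 ≠ 0)
    (hv : ∀ k, IsSubgradient Bfun (f k) (v k))
    (hmin : ∀ k, ∀ u : Fin n → ℝ,
      TVfun w (h k) + Efun w (f k) * norm2 (h k - (f k + c • v k))^2 / (2*c)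
        ≤ TVfun w u + Efun w (f k) * norm2 (u - (f k + c • v k))^2 / (2*c))
    (hnext : ∀ k, f (k+1) = (norm2 (h k))⁻¹ • h k) :
    Tendsto (fun k => norm2 (h k - f k)) atTop (𝓝 0) ∧
    Tendsto (fun k => norm2 (f (k+1) - f k)) atTop (𝓝 0) := by
  -- the invariant
  have inv : ∀ k, meanV (f k) = 0 ∧ f k ≠ 0 := by
    intro k; induction k with
    | zero => exact ⟨hf0, hf0nz⟩
    | succ k ih =>
      obtain ⟨hm, hnz, -, -, -⟩ := step_lemma w hnn hconn hc ih.1 ih.2 (hv k) (hmin k)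
      have hpos := norm2_pos hnz
      rw [hnext k]
      constructor
      · rw [meanV_smul, hm, mul_zero]
      · intro h0
        apply hnz
        have := congrArg (fun u => (norm2 (h k)) • u) h0
        simpa [smul_smul, mul_inv_cancel₀ hpos.ne', smul_zero, one_smul] using this
  have stepk : ∀ k, meanV (h k) = 0 ∧ h k ≠ 0 ∧ Efun w (f (k+1)) ≤ Efun w (f k) ∧
      norm2 (h k - f k)^2 ≤ 2*c*(Bfun (h k)) ∧
      Efun w (f k) * norm2 (h k - f k)^2
        ≤ 2*c*(Bfun (h k))*(Efun w (f k) - Efun w (f (k+1))) := by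
    intro k
    have := step_lemma w hnn hconn hc (inv k).1 (inv k).2 (hv k) (hmin k)
    rwa [← hnext k] at this
  have hEpos : ∀ k, 0 < Efun w (f k) := fun k => Efun_pos hnn hconn (inv k).1 (inv k).2
  have hnorm1 : ∀ k, norm2 (f (k+1)) = 1 := by
    intro k
    rw [hnext k, norm2_smul, abs_of_nonneg (inv_nonneg.mpr (norm2_nonneg _)),
      inv_mul_cancel₀ (norm2_pos (stepk k).2.1).ne']
  -- convergence of energies
  have hanti : Antitone (fun k => Efun w (f k)) :=
    antitone_nat_of_succ_le (fun k => (stepk k).2.2.1)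
  have hbdd : BddBelow (Set.range (fun k => Efun w (f k))) :=
    ⟨0, by rintro x ⟨k, rfl⟩; exact (hEpos k).le⟩
  have hconv : Tendsto (fun k => Efun w (f k)) atTop (𝓝 (⨅ k, Efun w (f k))) :=
    tendsto_atTop_ciInf hanti hbdd
  have hdiff : Tendsto (fun k => Efun w (f k) - Efun w (f (k+1))) atTop (𝓝 0) := by
    have h2 : Tendsto (fun k => Efun w (f (k+1))) atTop (𝓝 (⨅ k, Efun w (f k))) := by
      have := hconv.comp (tendsto_add_atTop_nat 1)
      simpa [Function.comp_def] using this
    simpa using hconv.sub h2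
  -- compactness and the lower bound α
  set K : Set (Fin n → ℝ) := {u | meanV u = 0 ∧ norm2 u = 1} with hK
  have hKmem : ∀ {u : Fin n → ℝ}, meanV u = 0 → u ≠ 0 → ((norm2 u)⁻¹ • u) ∈ K := by
    intro u hm hnz
    have hpos := norm2_pos hnz
    constructor
    · rw [meanV_smul, hm, mul_zero]
    · rw [norm2_smul, abs_of_nonneg (inv_nonneg.mpr (norm2_nonneg _)),
        inv_mul_cancel₀ hpos.ne']
  have hKnz : ∀ {u : Fin n → ℝ}, u ∈ K → u ≠ 0 := by
    intro u hu h0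
    have : norm2 u = 0 := by rw [h0]; simp [norm2]
    rw [hu.2] at this; norm_num at this
  have hmeanc : Continuous (fun u : Fin n → ℝ => meanV u) :=
    (continuous_finset_sum _ fun i _ => continuous_apply i).div_const _
  have hnorm2c : Continuous (fun u : Fin n → ℝ => norm2 u) :=
    Real.continuous_sqrt.comp (continuous_finset_sum _ fun i _ => (continuous_apply i).pow 2)
  have hKclosed : IsClosed K := by
    have : K = {u : Fin n → ℝ | meanV u = 0} ∩ {u | norm2 u = 1} := rfl
    rw [this]
    exact (isClosed_eq hmeanc continuous_const).inter (isClosed_eq hnorm2c continuous_const)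
  have hKbdd : Bornology.IsBounded K := by
    apply (Metric.isBounded_closedBall (x := (0 : Fin n → ℝ)) (r := 1)).subset
    intro u hu
    rw [Metric.mem_closedBall, dist_zero_right]
    rw [pi_norm_le_iff_of_nonneg zero_le_one]
    intro i
    rw [Real.norm_eq_abs]
    have h1 : (u i)^2 ≤ ∑ j, (u j)^2 :=
      Finset.single_le_sum (fun j _ => sq_nonneg (u j)) (Finset.mem_univ i)
    have h2 : ∑ j, (u j)^2 = 1 := by
      have h3 := hu.2
      rw [norm2] at h3
      nlinarith [Real.sq_sqrt (show (0:ℝ) ≤ ∑ j, (u j)^2 by positivity)]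
    nlinarith [abs_nonneg (u i), sq_abs (u i)]
  have hKcompact : IsCompact K := Metric.isCompact_of_isClosed_isBounded hKclosed hKbdd
  have hTVc : Continuous (fun u : Fin n → ℝ => TVfun w u) :=
    continuous_const.mul (continuous_finset_sum _ fun i _ => continuous_finset_sum _ fun j _ =>
      continuous_const.mul (((continuous_apply i).sub (continuous_apply j)).abs))
  have hBc : Continuous (fun u : Fin n → ℝ => Bfun u) :=
    continuous_finset_sum _ fun i _ => ((continuous_apply i).sub hmeanc).abs
  have hcont : ContinuousOn (fun u : Fin n → ℝ => Efun w u) K :=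
    hTVc.continuousOn.div hBc.continuousOn (fun u hu => (Bfun_pos hu.1 (hKnz hu)).ne')
  obtain ⟨u0, hu0K, hu0min'⟩ := hKcompact.exists_isMinOn ⟨_, hKmem hf0 hf0nz⟩ hcont
  have hu0min : ∀ y ∈ K, Efun w u0 ≤ Efun w y := fun y hy => hu0min' hy
  set α := Efun w u0 with hαdef
  have hα : 0 < α := Efun_pos hnn hconn hu0K.1 (hKnz hu0K)
  have hαle : ∀ k, α ≤ Efun w (f k) := by
    intro k
    have hk := inv k
    have hmem := hKmem hk.1 hk.2
    have := hu0min _ hmem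
    rwa [Efun_smul w (inv_ne_zero (norm2_pos hk.2).ne')] at this
  -- uniform bound on Bfun (h k)
  set M := max (norm2 (f 0)) 1 with hM
  have hM1 : (1:ℝ) ≤ M := le_max_right _ _
  have hfM : ∀ k, norm2 (f k) ≤ M := by
    intro k; cases k with
    | zero => exact le_max_left _ _
    | succ k => rw [hnorm1 k]; exact hM1
  have hsn : (0:ℝ) ≤ Real.sqrt n := Real.sqrt_nonneg _
  have hhMx : ∀ k, norm2 (h k) ≤ M + norm2 (h k - f k) := by
    intro k
    calc norm2 (h k) = norm2 (f k + (h k - f k)) := by rw [add_sub_cancel]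
      _ ≤ norm2 (f k) + norm2 (h k - f k) := norm2_triangle _ _
      _ ≤ M + norm2 (h k - f k) := by linarith [hfM k]
  set X := 2*c*Real.sqrt n + M with hX
  have hxB : ∀ k, norm2 (h k - f k) ≤ X := by
    intro k
    set x := norm2 (h k - f k) with hxdef
    have hx0 : 0 ≤ x := norm2_nonneg _
    have hBle : Bfun (h k) ≤ Real.sqrt n * (M + x) := by
      refine (Bfun_le_sqrt (stepk k).1).trans ?_
      have := hhMx k
      nlinarith [hsn]
    have hx2 : x^2 ≤ 2*c*(Real.sqrt n*(M+x)) := by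
      refine le_trans (stepk k).2.2.2.1 ?_
      nlinarith [hc]
    nlinarith [hx2, hx0, hM1, hsn, hc]
  set CB := Real.sqrt n * (M + X) with hCB
  have hBCB : ∀ k, Bfun (h k) ≤ CB := by
    intro k
    refine (Bfun_le_sqrt (stepk k).1).trans ?_
    have h1 := hhMx k
    have h2 := hxB k
    rw [hCB]
    nlinarith [hsn]
  -- the squeeze
  have hsq : ∀ k, norm2 (h k - f k)^2 ≤ (2*c*CB/α) * (Efun w (f k) - Efun w (f (k+1))) := by
    intro k
    have hq := (stepk k).2.2.2.2
    have hd : 0 ≤ Efun w (f k) - Efun w (f (k+1)) := sub_nonneg.mpr (stepk k).2.2.1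
    have hint1 : 0 ≤ (Efun w (f k) - α) * (norm2 (h k - f k)^2) :=
      mul_nonneg (sub_nonneg.mpr (hαle k)) (sq_nonneg _)
    have hint2 : 0 ≤ (2*c) * ((CB - Bfun (h k)) * (Efun w (f k) - Efun w (f (k+1)))) :=
      mul_nonneg (by linarith) (mul_nonneg (sub_nonneg.mpr (hBCB k)) hd)
    have h1 : α * (norm2 (h k - f k)^2) ≤ 2*c*CB*(Efun w (f k) - Efun w (f (k+1)))  := by
      nlinarith [hq, hint1, hint2]
    rw [div_mul_eq_mul_div, le_div_iff₀ hα]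
    linarith [h1]
  have hto0 : Tendsto (fun k => norm2 (h k - f k)^2) atTop (𝓝 0) := by
    apply squeeze_zero (fun k => sq_nonneg _) hsq
    have := hdiff.const_mul (2*c*CB/α)
    simpa using this
  have hfirst : Tendsto (fun k => norm2 (h k - f k)) atTop (𝓝 0) := by
    have h1 := (Real.continuous_sqrt.tendsto 0).comp hto0
    rw [Real.sqrt_zero] at h1
    have heq : (fun k => Real.sqrt (norm2 (h k - f k)^2)) = fun k => norm2 (h k - f k) :=
      funext fun k => Real.sqrt_sq (norm2_nonneg _)
    rw [show Real.sqrt ∘ (fun k => norm2 (h k - f k)^2) = fun k => Real.sqrt (norm2 (h k - f k)^2) from rfl, heq] at h1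
    exact h1
  refine ⟨hfirst, ?_⟩
  -- second limit
  have hbound : ∀ k, 1 ≤ k → norm2 (f (k+1) - f k) ≤ 2 * norm2 (h k - f k) := by
    intro k hk
    obtain ⟨j, rfl⟩ := Nat.exists_eq_succ_of_ne_zero (by omega : k ≠ 0)
    have hnf : norm2 (f (j+1)) = 1 := hnorm1 j
    have hnh := norm2_pos (stepk (j+1)).2.1
    have tri : norm2 (f (j+1+1) - f (j+1))
        ≤ norm2 (f (j+1+1) - h (j+1)) + norm2 (h (j+1) - f (j+1)) := by
      rw [← sub_add_sub_cancel (f (j+1+1)) (h (j+1)) (f (j+1))]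
      exact norm2_triangle _ _
    have h2 : norm2 (f (j+1+1) - h (j+1)) = |1 - norm2 (h (j+1))| := by
      rw [hnext (j+1)]
      have e : (norm2 (h (j+1)))⁻¹ • h (j+1) - h (j+1)
          = ((norm2 (h (j+1)))⁻¹ - 1) • h (j+1) := by
        rw [sub_smul, one_smul]
      rw [e, norm2_smul]
      have e2 : |(norm2 (h (j+1)))⁻¹ - 1| * norm2 (h (j+1))
          = |((norm2 (h (j+1)))⁻¹ - 1) * norm2 (h (j+1))| := by
        rw [abs_mul, abs_of_nonneg (norm2_nonneg _)]
      rw [e2, sub_mul, inv_mul_cancel₀ hnh.ne', one_mul]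
    have h3 : |1 - norm2 (h (j+1))| ≤ norm2 (h (j+1) - f (j+1)) := by
      calc |1 - norm2 (h (j+1))| = |norm2 (f (j+1)) - norm2 (h (j+1))| := by rw [hnf]
        _ ≤ norm2 (f (j+1) - h (j+1)) := abs_norm2_sub_norm2 _ _
        _ = norm2 (h (j+1) - f (j+1)) := norm2_sub_rev _ _
    rw [h2] at tri
    linarith
  have h2x : Tendsto (fun k => 2 * norm2 (h k - f k)) atTop (𝓝 0) := by
    simpa using hfirst.const_mul 2
  apply tendsto_of_tendsto_of_tendsto_of_le_of_le' tendsto_const_nhds h2x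
  · exact Eventually.of_forall (fun k => norm2_nonneg _)
  · filter_upwards [eventually_ge_atTop 1] with k hk
    exact hbound k hk
end

section
/- The map Ψ^c(f,g) = argmin_u { T(u) + E(f)‖u − g‖₂²/(2c) } is continuous on K₁ × K₂, satisfying the quantitative estimate ‖Ψ^c(f',g') − Ψ^c(f,g)‖₂ ≤ ‖g' − g‖₂ + 2‖g'‖₂·|E(f') − E(f)|/E(f). -/
open Finset Filter Topology

def K1set (n : ℕ) : Set (Fin n → ℝ) := {u | norm2 u = 1 ∧ meanV u = 0}
def K2set (n : ℕ) (c : ℝ) : Set (Fin n → ℝ) :=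
  {u | 1 ≤ norm2 u ∧ norm2 u ≤ 1 + 2*c*Real.sqrt n ∧ meanV u = 0}



namespace Aux15
variable {n : ℕ}

lemma sq_sum_nonneg (f : Fin n → ℝ) : 0 ≤ ∑ i, (f i)^2 :=
  Finset.sum_nonneg fun i _ => sq_nonneg _

lemma norm2_nonneg (f : Fin n → ℝ) : 0 ≤ norm2 f := Real.sqrt_nonneg _

lemma norm2_sq (f : Fin n → ℝ) : norm2 f ^ 2 = ∑ i, (f i)^2 :=
  Real.sq_sqrt (sq_sum_nonneg f)

lemma norm2_mono {f g : Fin n → ℝ} (h : ∑ i, (f i)^2 ≤ ∑ i, (g i)^2) :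
    norm2 f ≤ norm2 g := Real.sqrt_le_sqrt h

lemma abs_dot_le (u v : Fin n → ℝ) : |dotV u v| ≤ norm2 u * norm2 v := by
  have h := Finset.sum_mul_sq_le_sq_mul_sq Finset.univ u v
  have : |dotV u v| = Real.sqrt ((dotV u v)^2) := (Real.sqrt_sq_eq_abs _).symm
  rw [this, norm2, norm2, ← Real.sqrt_mul (sq_sum_nonneg u)]
  exact Real.sqrt_le_sqrt h

lemma sq_sum_add (u v : Fin n → ℝ) :
    ∑ i, (u i + v i)^2 = (∑ i, (u i)^2) + 2 * dotV u v + ∑ i, (v i)^2 := by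
  unfold dotV
  rw [Finset.mul_sum, ← Finset.sum_add_distrib, ← Finset.sum_add_distrib]
  exact Finset.sum_congr rfl fun i _ => by ring

lemma norm2_triangle (u v : Fin n → ℝ) : norm2 (u + v) ≤ norm2 u + norm2 v := by
  have h1 : norm2 (u + v) ^ 2 ≤ (norm2 u + norm2 v)^2 := by
    rw [norm2_sq]
    have : ∑ i, ((u + v) i)^2 = ∑ i, (u i + v i)^2 := rfl
    rw [this, sq_sum_add, ← norm2_sq u, ← norm2_sq v]
    have := abs_dot_le u v
    have h2 : dotV u v ≤ norm2 u * norm2 v := (le_abs_self _).trans this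
    nlinarith
  have h0 : 0 ≤ norm2 u + norm2 v := add_nonneg (norm2_nonneg u) (norm2_nonneg v)
  nlinarith [norm2_nonneg (u + v)]

end Aux15


namespace Aux15
variable {n : ℕ}

lemma TV_nonneg (w : Fin n → Fin n → ℝ) (hnn : ∀ i j, 0 ≤ w i j) (f : Fin n → ℝ) :
    0 ≤ TVfun w f := by
  unfold TVfun
  have : 0 ≤ ∑ i, ∑ j, w i j * |f i - f j| :=
    Finset.sum_nonneg fun i _ => Finset.sum_nonneg fun j _ =>
      mul_nonneg (hnn i j) (abs_nonneg _)
  linarith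

lemma TV_zero (w : Fin n → Fin n → ℝ) : TVfun w (0 : Fin n → ℝ) = 0 := by
  unfold TVfun
  simp

lemma TV_convex (w : Fin n → Fin n → ℝ) (hnn : ∀ i j, 0 ≤ w i j) (u v : Fin n → ℝ)
    {t : ℝ} (ht0 : 0 ≤ t) (ht1 : t ≤ 1) :
    TVfun w (u + t • (v - u)) ≤ (1 - t) * TVfun w u + t * TVfun w v := by
  unfold TVfun
  rw [← mul_assoc, mul_comm (1-t) (1/2:ℝ), ← mul_assoc, mul_comm t (1/2:ℝ), mul_assoc, mul_assoc,
    ← mul_add]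
  have h2 : (0:ℝ) ≤ 1/2 := by norm_num
  apply mul_le_mul_of_nonneg_left _ h2
  rw [Finset.mul_sum, Finset.mul_sum, ← Finset.sum_add_distrib]
  apply Finset.sum_le_sum
  intro i _
  rw [Finset.mul_sum, Finset.mul_sum, ← Finset.sum_add_distrib]
  apply Finset.sum_le_sum
  intro j _
  have hpt : |(u + t • (v - u)) i - (u + t • (v - u)) j|
      ≤ (1 - t) * |u i - u j| + t * |v i - v j| := by
    have : (u + t • (v - u)) i - (u + t • (v - u)) j
        = (1 - t) * (u i - u j) + t * (v i - v j) := by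
      simp [Pi.add_apply, Pi.smul_apply, Pi.sub_apply, smul_eq_mul]; ring
    rw [this]
    calc |(1 - t) * (u i - u j) + t * (v i - v j)|
        ≤ |(1 - t) * (u i - u j)| + |t * (v i - v j)| := abs_add_le _ _
      _ = (1 - t) * |u i - u j| + t * |v i - v j| := by
          rw [abs_mul, abs_mul, abs_of_nonneg (by linarith : (0:ℝ) ≤ 1 - t), abs_of_nonneg ht0]
  calc w i j * |(u + t • (v - u)) i - (u + t • (v - u)) j|
      ≤ w i j * ((1 - t) * |u i - u j| + t * |v i - v j|) :=
        mul_le_mul_of_nonneg_left hpt (hnn i j)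
    _ = (1 - t) * (w i j * |u i - u j|) + t * (w i j * |v i - v j|) := by ring

lemma limit_aux (A C : ℝ) (h : ∀ t : ℝ, 0 < t → t ≤ 1 → 0 ≤ A + t * C) : 0 ≤ A := by
  by_contra hA
  push_neg at hA
  rcases le_or_gt C 0 with hC | hC
  · have := h 1 one_pos le_rfl
    nlinarith
  · set t := min 1 (-A / (2 * C)) with ht
    have ht0 : 0 < t := lt_min one_pos (div_pos (by linarith) (by linarith))
    have ht1 : t ≤ 1 := min_le_left _ _
    have h2 : t ≤ -A / (2 * C) := min_le_right _ _
    have h3 := h t ht0 ht1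
    have h4 : t * C ≤ (-A / (2 * C)) * C := mul_le_mul_of_nonneg_right h2 hC.le
    have h5 : (-A / (2 * C)) * C = -A / 2 := by field_simp
    linarith

lemma sq_sum_add_smul (x y : Fin n → ℝ) (t : ℝ) :
    ∑ i, (x i + t * y i)^2
      = (∑ i, (x i)^2) + 2 * t * dotV x y + t^2 * ∑ i, (y i)^2 := by
  unfold dotV
  rw [Finset.mul_sum, Finset.mul_sum, ← Finset.sum_add_distrib, ← Finset.sum_add_distrib]
  exact Finset.sum_congr rfl fun i _ => by ring

lemma VI (w : Fin n → Fin n → ℝ) (hnn : ∀ i j, 0 ≤ w i j) {a c : ℝ} (hc : 0 < c)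
    (u g : Fin n → ℝ)
    (hmin : ∀ v, TVfun w u + a * norm2 (u - g)^2/(2*c)
      ≤ TVfun w v + a * norm2 (v - g)^2/(2*c))
    (v : Fin n → ℝ) :
    0 ≤ TVfun w v - TVfun w u + (a/c) * dotV (u - g) (v - u) := by
  set D := dotV (u - g) (v - u) with hD
  set S := ∑ i, ((v - u) i)^2 with hS
  apply limit_aux _ (a/(2*c) * S)
  intro t ht0 ht1
  have hm := hmin (u + t • (v - u))
  have hTc := TV_convex w hnn u v ht0.le ht1
  have e1 : norm2 (u + t • (v - u) - g)^2
      = norm2 (u - g)^2 + 2*t*D + t^2 * S := by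
    rw [norm2_sq, norm2_sq]
    have e0 : ∑ i, ((u + t • (v - u) - g) i)^2 = ∑ i, ((u - g) i + t * (v - u) i)^2 := by
      apply Finset.sum_congr rfl
      intro i _
      congr 1
      simp only [Pi.add_apply, Pi.sub_apply, Pi.smul_apply, smul_eq_mul]
      ring
    rw [e0, sq_sum_add_smul]
  rw [e1] at hm
  have split : TVfun w (u + t • (v - u))
      + a * (norm2 (u - g)^2 + 2*t*D + t^2 * S)/(2*c)
      = TVfun w (u + t • (v - u)) + a * norm2 (u - g)^2/(2*c)
        + (t * (a/c * D) + t^2 * (a/(2*c) * S)) := by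
    field_simp
    ring
  rw [split] at hm
  have key : 0 ≤ t * ((TVfun w v - TVfun w u + a/c * D) + t * (a/(2*c) * S)) := by
    have e2 : t * ((TVfun w v - TVfun w u + a/c * D) + t * (a/(2*c) * S))
        = t * TVfun w v - t * TVfun w u + (t * (a/c * D) + t^2 * (a/(2*c) * S)) := by
      ring
    rw [e2]
    nlinarith
  exact le_of_mul_le_mul_left (by linarith) ht0

lemma min_norm_bound (w : Fin n → Fin n → ℝ) (hnn : ∀ i j, 0 ≤ w i j) {a c : ℝ}
    (ha : 0 < a) (hc : 0 < c) (u g : Fin n → ℝ)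
    (hmin : ∀ v, TVfun w u + a * norm2 (u - g)^2/(2*c)
      ≤ TVfun w v + a * norm2 (v - g)^2/(2*c)) :
    norm2 (u - g) ≤ norm2 g := by
  have hm := hmin 0
  rw [TV_zero] at hm
  have e : norm2 ((0 : Fin n → ℝ) - g) = norm2 g := by
    unfold norm2
    congr 1
    exact Finset.sum_congr rfl fun i _ => by simp
  rw [e] at hm
  have hT := TV_nonneg w hnn u
  have h1 : a * norm2 (u - g)^2/(2*c) ≤ a * norm2 g^2/(2*c) := by linarith
  have h2 := mul_le_mul_of_nonneg_left h1 (le_of_lt (by linarith : (0:ℝ) < 2*c))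
  have h3 : a * norm2 (u - g)^2 ≤ a * norm2 g^2 := by
    calc a * norm2 (u - g)^2 = (2*c) * (a * norm2 (u - g)^2/(2*c)) := by field_simp
      _ ≤ (2*c) * (a * norm2 g^2/(2*c)) := h2
      _ = a * norm2 g^2 := by field_simp
  have h4 : norm2 (u - g)^2 ≤ norm2 g^2 := le_of_mul_le_mul_left (by linarith) ha
  nlinarith [norm2_nonneg (u - g), norm2_nonneg g]

end Aux15


namespace Aux15
variable {n : ℕ}

lemma exists_edge {r : Fin n → Fin n → Prop} {f : Fin n → ℝ} {i j : Fin n}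
    (h : Relation.ReflTransGen r i j) (hne : f i ≠ f j) :
    ∃ a b, r a b ∧ f a ≠ f b := by
  induction h with
  | refl => exact absurd rfl hne
  | @tail b c hib hbc ih =>
    by_cases hfb : f i = f b
    · exact ⟨b, c, hbc, by rw [← hfb]; exact hne⟩
    · exact ih hfb

lemma Efun_pos (w : Fin n → Fin n → ℝ) (hnn : ∀ i j, 0 ≤ w i j)
    (hconn : GraphConnected w) {f : Fin n → ℝ} (hf : f ∈ K1set n) :
    0 < Efun w f := by
  obtain ⟨hn1, hm0⟩ := hf
  have hsum1 : ∑ i, (f i)^2 = 1 := by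
    rw [← norm2_sq, hn1]; norm_num
  have hex : ∃ i0, f i0 ≠ 0 := by
    by_contra h
    push_neg at h
    rw [Finset.sum_eq_zero (fun i _ => by rw [h i]; ring)] at hsum1
    norm_num at hsum1
  obtain ⟨i0, hi0⟩ := hex
  have hB : 0 < Bfun f := by
    unfold Bfun
    rw [hm0]
    simp only [sub_zero]
    have h1 : |f i0| ≤ ∑ i, |f i| :=
      Finset.single_le_sum (f := fun i => |f i|) (fun i _ => abs_nonneg _) (Finset.mem_univ i0)
    have h2 : 0 < |f i0| := abs_pos.mpr hi0
    linarith
  have hnonconst : ∃ i j, f i ≠ f j := by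
    by_contra h
    push_neg at h
    have hmean : meanV f = f i0 := by
      unfold meanV
      rw [Finset.sum_congr rfl (fun i _ => h i i0)]
      rw [Finset.sum_const, Finset.card_univ, Fintype.card_fin, nsmul_eq_mul]
      have hn : (n : ℝ) ≠ 0 := Nat.cast_ne_zero.mpr i0.pos.ne'
      field_simp
    rw [hm0] at hmean
    exact hi0 hmean.symm
  obtain ⟨i, j, hij⟩ := hnonconst
  obtain ⟨a, b, hr, hfab⟩ := exists_edge (hconn i j) hij
  have hT : 0 < TVfun w f := by
    unfold TVfun
    have hterm : 0 < w a b * |f a - f b| :=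
      mul_pos hr (abs_pos.mpr (sub_ne_zero.mpr hfab))
    have h1 : w a b * |f a - f b| ≤ ∑ j', w a j' * |f a - f j'| :=
      Finset.single_le_sum (f := fun j' => w a j' * |f a - f j'|)
        (fun j' _ => mul_nonneg (hnn a j') (abs_nonneg _)) (Finset.mem_univ b)
    have h2 : ∑ j', w a j' * |f a - f j'| ≤ ∑ i', ∑ j', w i' j' * |f i' - f j'| :=
      Finset.single_le_sum (f := fun i' => ∑ j', w i' j' * |f i' - f j'|)
        (fun i' _ => Finset.sum_nonneg fun j' _ => mul_nonneg (hnn i' j') (abs_nonneg _))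
        (Finset.mem_univ a)
    linarith
  exact div_pos hT hB

end Aux15

namespace Aux15
variable {n : ℕ}

lemma dot_self_eq (d : Fin n → ℝ) : dotV d d = ∑ i, (d i)^2 :=
  Finset.sum_congr rfl fun i _ => by ring

lemma contraction (w : Fin n → Fin n → ℝ) (hnn : ∀ i j, 0 ≤ w i j) {a c : ℝ}
    (ha : 0 < a) (hc : 0 < c) (u1 u2 g g' : Fin n → ℝ)
    (hmin1 : ∀ v, TVfun w u1 + a * norm2 (u1 - g)^2/(2*c)
      ≤ TVfun w v + a * norm2 (v - g)^2/(2*c))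
    (hmin2 : ∀ v, TVfun w u2 + a * norm2 (u2 - g')^2/(2*c)
      ≤ TVfun w v + a * norm2 (v - g')^2/(2*c)) :
    norm2 (u2 - u1) ≤ norm2 (g' - g) := by
  have vi1 := VI w hnn hc u1 g hmin1 u2
  have vi2 := VI w hnn hc u2 g' hmin2 u1
  have key : dotV (u1 - g) (u2 - u1) + dotV (u2 - g') (u1 - u2)
      = dotV (g' - g) (u2 - u1) - dotV (u2 - u1) (u2 - u1) := by
    unfold dotV
    rw [← Finset.sum_add_distrib, ← Finset.sum_sub_distrib]
    exact Finset.sum_congr rfl fun i _ => by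
      simp only [Pi.sub_apply]; ring
  have hac : 0 < a / c := div_pos ha hc
  have h1 : 0 ≤ (a/c) * (dotV (u1 - g) (u2 - u1) + dotV (u2 - g') (u1 - u2)) := by
    have := add_nonneg vi1 vi2
    nlinarith [vi1, vi2]
  rw [key] at h1
  have h2 : dotV (u2 - u1) (u2 - u1) ≤ dotV (g' - g) (u2 - u1) := by
    nlinarith [h1, hac]
  have h3 : dotV (g' - g) (u2 - u1) ≤ norm2 (g' - g) * norm2 (u2 - u1) :=
    (le_abs_self _).trans (abs_dot_le _ _)
  have h4 : norm2 (u2 - u1)^2 ≤ norm2 (g' - g) * norm2 (u2 - u1) := by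
    rw [norm2_sq, ← dot_self_eq]; linarith
  rcases eq_or_lt_of_le (norm2_nonneg (u2 - u1)) with h0 | h0
  · rw [← h0]; exact norm2_nonneg _
  · nlinarith

lemma step2 (w : Fin n → Fin n → ℝ) (hnn : ∀ i j, 0 ≤ w i j) {a a' c : ℝ}
    (ha : 0 < a) (ha' : 0 < a') (hc : 0 < c) (u2 u3 g' : Fin n → ℝ)
    (hmin2 : ∀ v, TVfun w u2 + a * norm2 (u2 - g')^2/(2*c)
      ≤ TVfun w v + a * norm2 (v - g')^2/(2*c))
    (hmin3 : ∀ v, TVfun w u3 + a' * norm2 (u3 - g')^2/(2*c)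
      ≤ TVfun w v + a' * norm2 (v - g')^2/(2*c)) :
    norm2 (u3 - u2) ≤ |a' - a| * norm2 g' / a := by
  have vi2 := VI w hnn hc u2 g' hmin2 u3
  have vi3 := VI w hnn hc u3 g' hmin3 u2
  -- dot identities
  have key : dotV (u2 - g') (u3 - u2)
      = dotV (u3 - g') (u3 - u2) - dotV (u3 - u2) (u3 - u2) := by
    unfold dotV
    rw [← Finset.sum_sub_distrib]
    exact Finset.sum_congr rfl fun i _ => by simp only [Pi.sub_apply]; ring
  have key2 : dotV (u3 - g') (u2 - u3) = - dotV (u3 - g') (u3 - u2) := by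
    unfold dotV
    rw [← Finset.sum_neg_distrib]
    exact Finset.sum_congr rfl fun i _ => by simp only [Pi.sub_apply]; ring
  rw [key] at vi2
  rw [key2] at vi3
  -- add: 0 ≤ (a/c)*(D - S) - (a'/c)*D  where D = dot (u3-g') e, S = dot e e
  set D := dotV (u3 - g') (u3 - u2) with hD
  set S := dotV (u3 - u2) (u3 - u2) with hS
  have hsum : 0 ≤ (a/c) * (D - S) + (a'/c) * (-D) := by nlinarith [vi2, vi3]
  have hmain : a * S ≤ (a - a') * D := by
    have hc' : c ≠ 0 := ne_of_gt hc
    have : (a/c) * (D - S) + (a'/c) * (-D) = ((a - a') * D - a * S) / c := by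
      field_simp; ring
    rw [this] at hsum
    have := (div_nonneg_iff.mp hsum)
    rcases this with ⟨h, _⟩ | ⟨_, h⟩
    · linarith
    · linarith
  have hbound : (a - a') * D ≤ |a' - a| * (norm2 g' * norm2 (u3 - u2)) := by
    have hd : D ≤ |D| := le_abs_self _
    have habs : |(a - a') * D| ≤ |a' - a| * (norm2 (u3 - g') * norm2 (u3 - u2)) := by
      rw [abs_mul, abs_sub_comm]
      exact mul_le_mul_of_nonneg_left (abs_dot_le _ _) (abs_nonneg _)
    have hng : norm2 (u3 - g') ≤ norm2 g' := min_norm_bound w hnn ha' hc u3 g' hmin3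
    have : |a' - a| * (norm2 (u3 - g') * norm2 (u3 - u2))
        ≤ |a' - a| * (norm2 g' * norm2 (u3 - u2)) := by
      apply mul_le_mul_of_nonneg_left _ (abs_nonneg _)
      exact mul_le_mul_of_nonneg_right hng (norm2_nonneg _)
    calc (a - a') * D ≤ |(a - a') * D| := le_abs_self _
      _ ≤ |a' - a| * (norm2 (u3 - g') * norm2 (u3 - u2)) := habs
      _ ≤ |a' - a| * (norm2 g' * norm2 (u3 - u2)) := this
  have hSe : S = norm2 (u3 - u2)^2 := by rw [norm2_sq, ← dot_self_eq]
  rw [hSe] at hmain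
  -- a * N^2 ≤ |a'-a| * G * N
  rcases eq_or_lt_of_le (norm2_nonneg (u3 - u2)) with h0 | h0
  · rw [← h0]
    have : 0 ≤ |a' - a| * norm2 g' := mul_nonneg (abs_nonneg _) (norm2_nonneg _)
    positivity
  · rw [le_div_iff₀ ha]
    nlinarith [hmain, hbound]
  
end Aux15

namespace Aux15
variable {n : ℕ}

lemma Bfun_pos {f : Fin n → ℝ} (hf : f ∈ K1set n) : 0 < Bfun f := by
  obtain ⟨hn1, hm0⟩ := hf
  have hsum1 : ∑ i, (f i)^2 = 1 := by
    rw [← norm2_sq, hn1]; norm_num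
  have hex : ∃ i0, f i0 ≠ 0 := by
    by_contra h
    push_neg at h
    rw [Finset.sum_eq_zero (fun i _ => by rw [h i]; ring)] at hsum1
    norm_num at hsum1
  obtain ⟨i0, hi0⟩ := hex
  unfold Bfun
  rw [hm0]
  simp only [sub_zero]
  have h1 : |f i0| ≤ ∑ i, |f i| :=
    Finset.single_le_sum (f := fun i => |f i|) (fun i _ => abs_nonneg _) (Finset.mem_univ i0)
  have h2 : 0 < |f i0| := abs_pos.mpr hi0
  linarith

lemma norm2_zero : norm2 (0 : Fin n → ℝ) = 0 := by
  unfold norm2; simp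

lemma pi_norm_le_norm2 (x : Fin n → ℝ) : ‖x‖ ≤ norm2 x := by
  rw [pi_norm_le_iff_of_nonneg (norm2_nonneg x)]
  intro i
  rw [Real.norm_eq_abs, ← Real.sqrt_sq_eq_abs]
  exact Real.sqrt_le_sqrt
    (Finset.single_le_sum (f := fun j => (x j)^2) (fun j _ => sq_nonneg _) (Finset.mem_univ i))

lemma continuous_norm2 : Continuous (norm2 : (Fin n → ℝ) → ℝ) :=
  Real.continuous_sqrt.comp
    (continuous_finset_sum _ fun i _ => (continuous_apply i).pow 2)

lemma continuous_TV (w : Fin n → Fin n → ℝ) : Continuous (TVfun w) := by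
  unfold TVfun
  exact continuous_const.mul (continuous_finset_sum _ fun i _ =>
    continuous_finset_sum _ fun j _ =>
      continuous_const.mul ((continuous_apply i).sub (continuous_apply j)).abs)

lemma continuous_B : Continuous (Bfun : (Fin n → ℝ) → ℝ) := by
  have hm : Continuous (meanV : (Fin n → ℝ) → ℝ) :=
    (continuous_finset_sum _ fun i _ => continuous_apply i).div_const _
  exact continuous_finset_sum _ fun i _ => ((continuous_apply i).sub hm).abs

lemma estimate (w : Fin n → Fin n → ℝ) (hnn : ∀ i j, 0 ≤ w i j)
    (hconn : GraphConnected w) {c : ℝ} (hc : 0 < c)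
    (Psi : (Fin n → ℝ) → (Fin n → ℝ) → (Fin n → ℝ))
    (hPsi : ∀ f ∈ K1set n, ∀ g ∈ K2set n c, ∀ u : Fin n → ℝ,
      TVfun w (Psi f g) + Efun w f * norm2 (Psi f g - g)^2 / (2*c)
        ≤ TVfun w u + Efun w f * norm2 (u - g)^2 / (2*c)) :
    ∀ f ∈ K1set n, ∀ g ∈ K2set n c, ∀ f' ∈ K1set n, ∀ g' ∈ K2set n c,
      norm2 (Psi f' g' - Psi f g) ≤
        norm2 (g' - g) + 2 * norm2 g' * |Efun w f' - Efun w f| / Efun w f := by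
  intro f hf g hg f' hf' g' hg'
  have ha : 0 < Efun w f := Efun_pos w hnn hconn hf
  have ha' : 0 < Efun w f' := Efun_pos w hnn hconn hf'
  have hmin1 := hPsi f hf g hg
  have hmin2 := hPsi f hf g' hg'
  have hmin3 := hPsi f' hf' g' hg'
  have h1 : norm2 (Psi f g' - Psi f g) ≤ norm2 (g' - g) :=
    contraction w hnn ha hc _ _ g g'
      (fun v => by have := hmin1 v; linarith [this])
      (fun v => by have := hmin2 v; linarith [this])
  have h2 : norm2 (Psi f' g' - Psi f g') ≤ |Efun w f' - Efun w f| * norm2 g' / Efun w f :=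
    step2 w hnn ha ha' hc _ _ g'
      (fun v => by have := hmin2 v; linarith [this])
      (fun v => by have := hmin3 v; linarith [this])
  have htri : norm2 (Psi f' g' - Psi f g)
      ≤ norm2 (Psi f' g' - Psi f g') + norm2 (Psi f g' - Psi f g) := by
    have := norm2_triangle (Psi f' g' - Psi f g') (Psi f g' - Psi f g)
    rwa [sub_add_sub_cancel] at this
  have hfin : |Efun w f' - Efun w f| * norm2 g' / Efun w f
      ≤ 2 * norm2 g' * |Efun w f' - Efun w f| / Efun w f := by
    have hnn' : 0 ≤ |Efun w f' - Efun w f| * norm2 g' / Efun w f := by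
      apply div_nonneg _ ha.le
      exact mul_nonneg (abs_nonneg _) (norm2_nonneg _)
    have he : 2 * norm2 g' * |Efun w f' - Efun w f| / Efun w f
        = 2 * (|Efun w f' - Efun w f| * norm2 g' / Efun w f) := by ring
    rw [he]
    linarith
  linarith

end Aux15

namespace Aux15
variable {n : ℕ}

lemma contOn (w : Fin n → Fin n → ℝ) (hnn : ∀ i j, 0 ≤ w i j)
    (hconn : GraphConnected w) {c : ℝ} (hc : 0 < c)
    (Psi : (Fin n → ℝ) → (Fin n → ℝ) → (Fin n → ℝ))
    (hPsi : ∀ f ∈ K1set n, ∀ g ∈ K2set n c, ∀ u : Fin n → ℝ,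
      TVfun w (Psi f g) + Efun w f * norm2 (Psi f g - g)^2 / (2*c)
        ≤ TVfun w u + Efun w f * norm2 (u - g)^2 / (2*c)) :
    ContinuousOn (fun p : (Fin n → ℝ) × (Fin n → ℝ) => Psi p.1 p.2)
      ((K1set n) ×ˢ (K2set n c)) := by
  intro p hp
  obtain ⟨hf, hg⟩ := Set.mem_prod.mp hp
  have hest := estimate w hnn hconn hc Psi hPsi
  rw [ContinuousWithinAt, tendsto_iff_dist_tendsto_zero]
  set S := (K1set n) ×ˢ (K2set n c) with hSdef
  set h : (Fin n → ℝ) × (Fin n → ℝ) → ℝ := fun q =>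
    norm2 (q.2 - p.2) + 2 * norm2 q.2 * |Efun w q.1 - Efun w p.1| / Efun w p.1 with hhdef
  have hbound : ∀ q ∈ S, dist (Psi q.1 q.2) (Psi p.1 p.2) ≤ h q := by
    intro q hq
    obtain ⟨hf', hg'⟩ := Set.mem_prod.mp hq
    calc dist (Psi q.1 q.2) (Psi p.1 p.2) = ‖Psi q.1 q.2 - Psi p.1 p.2‖ := dist_eq_norm _ _
      _ ≤ norm2 (Psi q.1 q.2 - Psi p.1 p.2) := pi_norm_le_norm2 _
      _ ≤ _ := hest p.1 hf p.2 hg q.1 hf' q.2 hg'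
  have hE : ContinuousAt (fun q : (Fin n → ℝ) × (Fin n → ℝ) => Efun w q.1) p := by
    have hBne : Bfun p.1 ≠ 0 := (Bfun_pos hf).ne'
    have hEc : ContinuousAt (Efun w) p.1 :=
      ((continuous_TV w).continuousAt).div ((continuous_B).continuousAt) hBne
    exact hEc.comp continuousAt_fst
  have h1 : ContinuousAt h p := by
    apply ContinuousAt.add
    · exact (continuous_norm2.comp (continuous_snd.sub continuous_const)).continuousAt
    · apply ContinuousAt.div_const
      apply ContinuousAt.mul
      · exact (continuous_const.mul (continuous_norm2.comp continuous_snd)).continuousAt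
      · exact (hE.sub continuousAt_const).abs
  have h0 : h p = 0 := by
    simp only [hhdef, sub_self, norm2_zero, abs_zero, mul_zero, zero_div, add_zero]
  have hcont : Tendsto h (𝓝[S] p) (𝓝 0) := by
    have := h1.tendsto
    rw [h0] at this
    exact this.mono_left nhdsWithin_le_nhds
  exact squeeze_zero' (eventually_nhdsWithin_of_forall fun q _ => dist_nonneg)
    (eventually_nhdsWithin_of_forall hbound) hcont

end Aux15


theorem stmt15 {n : ℕ} (w : Fin n → Fin n → ℝ)
    (hsym : ∀ i j, w i j = w j i) (hnn : ∀ i j, 0 ≤ w i j)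
    (hconn : GraphConnected w) (c : ℝ) (hc : 0 < c)
    (Psi : (Fin n → ℝ) → (Fin n → ℝ) → (Fin n → ℝ))
    (hPsi : ∀ f ∈ K1set n, ∀ g ∈ K2set n c, ∀ u : Fin n → ℝ,
      TVfun w (Psi f g) + Efun w f * norm2 (Psi f g - g)^2 / (2*c)
        ≤ TVfun w u + Efun w f * norm2 (u - g)^2 / (2*c)) :
    ContinuousOn (fun p : (Fin n → ℝ) × (Fin n → ℝ) => Psi p.1 p.2)
      ((K1set n) ×ˢ (K2set n c)) ∧
    (∀ f ∈ K1set n, ∀ g ∈ K2set n c, ∀ f' ∈ K1set n, ∀ g' ∈ K2set n c,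
      norm2 (Psi f' g' - Psi f g) ≤
        norm2 (g' - g) + 2 * norm2 g' * |Efun w f' - Efun w f| / Efun w f) := by
  constructor
  · exact Aux15.contOn w hnn hconn hc Psi hPsi
  · exact Aux15.estimate w hnn hconn hc Psi hPsi
end
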